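/- Let u ∈ ℝ^n be nonconstant, let t* ∈ ℝ be a minimizer of t ↦ RCC({i : u_i > t}, {i : u_i ≤ t}) over all t for which {i : u_i > t} is nonempty and proper, set C*_u = {i : u_i > t*}, and let C be whichever of C*_u and its complement has smaller cardinality (so |C| ≤ |C̄|). If f ∈ ℝ^n, f ≠ 0, has 0 as a median (0 minimizes c ↦ Σ_i |f_i − c|) and satisfies F₁(f) ≤ F₁(1_C), then the best threshold cut of f is at least as good as that of u: min over t with {i : f_i > t} nonempty proper of RCC({i : f_i > t}, {i : f_i ≤ t}) ≤ RCC(C*_u, C̄*_u). -/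

import Mathlib

open Finset
open MeasureTheory

/-- Total variation `TV(f) = ½ Σ_{i,j} w_ij |f_i − f_j|`. -/
noncomputable def TV {n : ℕ} (W : Fin n → Fin n → ℝ) (f : Fin n → ℝ) : ℝ :=
  (1 / 2) * ∑ i, ∑ j, W i j * |f i - f j|

/-- `F₁(f) = TV(f) / ‖f‖₁`. -/
noncomputable def F1 {n : ℕ} (W : Fin n → Fin n → ℝ) (f : Fin n → ℝ) : ℝ :=
  TV W f / ∑ i, |f i|

/-- Ratio Cheeger cut of the partition `(C, Cᶜ)`. -/
noncomputable def RCC {n : ℕ} (W : Fin n → Fin n → ℝ) (C : Finset (Fin n)) : ℝ :=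
  (∑ i ∈ C, ∑ j ∈ Cᶜ, W i j) / min (C.card : ℝ) (Cᶜ.card : ℝ)

lemma qg_ind_integrable (a b c : ℝ) :
    Integrable ((Set.Ico a b).indicator (fun _ => c)) := by
  rw [integrable_indicator_iff measurableSet_Ico]
  exact integrableOn_const measure_Ico_lt_top.ne

lemma qg_ind_integral (a b c : ℝ) :
    ∫ t, (Set.Ico a b).indicator (fun _ => c) t = max (b - a) 0 * c := by
  rw [integral_indicator_const c measurableSet_Ico, Real.volume_real_Ico,
    smul_eq_mul]

lemma qg_max_add_max (a b : ℝ) : max (a - b) 0 + max (b - a) 0 = |a - b| := by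
  rcases le_total a b with h | h
  · rw [max_eq_right (by linarith), max_eq_left (by linarith), abs_of_nonpos (by linarith)]; ring
  · rw [max_eq_left (by linarith), max_eq_right (by linarith), abs_of_nonneg (by linarith)]; ring

lemma qg_median_half {n : ℕ} (f : Fin n → ℝ)
    (hmed : ∀ c : ℝ, ∑ i, |f i| ≤ ∑ i, |f i - c|) :
    ((univ : Finset (Fin n)).filter (fun i => 0 < f i)).card ≤
      (((univ : Finset (Fin n)).filter (fun i => 0 < f i))ᶜ).card := by
  classical
  set P := (univ : Finset (Fin n)).filter (fun i => 0 < f i) with hP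
  rcases P.eq_empty_or_nonempty with h | h
  · simp [h]
  · set c := (P.image f).min' (h.image f) with hc
    have hcP : ∀ i ∈ P, c ≤ f i := fun i hi => Finset.min'_le _ _ (mem_image_of_mem f hi)
    have hc0 : 0 < c := by
      obtain ⟨j, hj, hjc⟩ := Finset.mem_image.1 (Finset.min'_mem (P.image f) (h.image f))
      rw [hP] at hj
      have := (Finset.mem_filter.1 hj).2
      rw [← hc] at hjc
      linarith
    have e1 : ∀ i ∈ P, |f i - c| = |f i| - c := by
      intro i hi
      have h1 : 0 < f i := (Finset.mem_filter.1 hi).2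
      have h2 := hcP i hi
      rw [abs_of_nonneg (by linarith), abs_of_pos h1]
    have e2 : ∀ i ∈ Pᶜ, |f i - c| = |f i| + c := by
      intro i hi
      have h1 : ¬ (0 < f i) := by
        intro h1
        exact (Finset.mem_compl.1 hi) (by simp [hP, h1])
      push_neg at h1
      rw [abs_of_nonpos (by linarith), abs_of_nonpos h1]; ring
    have key : ∑ i, |f i - c| = ∑ i, |f i| + c * ((Pᶜ.card : ℝ) - P.card) := by
      rw [← Finset.sum_add_sum_compl P (fun i => |f i - c|),
        ← Finset.sum_add_sum_compl P (fun i => |f i|),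
        Finset.sum_congr rfl e1, Finset.sum_congr rfl e2]
      simp [Finset.sum_add_distrib, Finset.sum_sub_distrib]
      ring
    have := hmed c
    rw [key] at this
    have : (P.card : ℝ) ≤ (Pᶜ.card : ℝ) := by nlinarith
    exact_mod_cast this

lemma qg_median_half_neg {n : ℕ} (f : Fin n → ℝ)
    (hmed : ∀ c : ℝ, ∑ i, |f i| ≤ ∑ i, |f i - c|) :
    ((univ : Finset (Fin n)).filter (fun i => f i < 0)).card ≤
      (((univ : Finset (Fin n)).filter (fun i => f i < 0))ᶜ).card := by
  have h := qg_median_half (fun i => -f i) (fun c => by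
    calc ∑ i, |-f i| = ∑ i, |f i| := by simp [abs_neg]
      _ ≤ ∑ i, |f i - -c| := hmed (-c)
      _ = ∑ i, |-f i - c| := Finset.sum_congr rfl (fun i _ => by
          rw [show f i - -c = -(-f i - c) by ring, abs_neg]))
  simpa [neg_pos] using h

lemma qg_cut_sum {n : ℕ} (C : Finset (Fin n)) (V : Fin n → Fin n → ℝ) :
    (∑ i, ∑ j, if i ∈ C ∧ j ∉ C then V i j else 0) = ∑ i ∈ C, ∑ j ∈ Cᶜ, V i j := by
  classical
  have h1 : ∀ i : Fin n, (∑ j, if i ∈ C ∧ j ∉ C then V i j else 0)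
      = if i ∈ C then (∑ j ∈ Cᶜ, V i j) else 0 := by
    intro i
    by_cases hi : i ∈ C
    · rw [if_pos hi]
      calc ∑ j, (if i ∈ C ∧ j ∉ C then V i j else 0)
          = ∑ j, (if j ∈ Cᶜ then V i j else 0) :=
            Finset.sum_congr rfl fun j _ => by by_cases hj : j ∈ C <;> simp [hi, hj]
        _ = ∑ j ∈ Cᶜ, V i j := by rw [Finset.sum_ite_mem, Finset.univ_inter]
    · rw [if_neg hi]
      exact Finset.sum_eq_zero fun j _ => by simp [hi]
  calc ∑ i, ∑ j, (if i ∈ C ∧ j ∉ C then V i j else 0)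
      = ∑ i, (if i ∈ C then ∑ j ∈ Cᶜ, V i j else 0) :=
        Finset.sum_congr rfl fun i _ => h1 i
    _ = ∑ i ∈ C, ∑ j ∈ Cᶜ, V i j := by rw [Finset.sum_ite_mem, Finset.univ_inter]

/-- Quality guarantee: let `C*_u` be the best threshold set of a nonconstant vector `u`
and `C` the smaller of `C*_u` and its complement. If `f ≠ 0` has median `0` and
`F₁(f) ≤ F₁(1_C)`, then the best threshold cut of `f` is at least as good as that
of `u`. -/
theorem quality_guarantee (n : ℕ) (hn : 2 ≤ n)
    (W : Fin n → Fin n → ℝ)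
    (hsym : ∀ i j, W i j = W j i) (hnonneg : ∀ i j, 0 ≤ W i j)
    (u : Fin n → ℝ) (hu : ¬ ∃ c : ℝ, ∀ i, u i = c)
    (tstar : ℝ)
    (hts : (Finset.univ.filter (fun i => tstar < u i)).Nonempty ∧
      Finset.univ.filter (fun i => tstar < u i) ≠ Finset.univ)
    (htsmin : ∀ t : ℝ, (Finset.univ.filter (fun i => t < u i)).Nonempty →
      Finset.univ.filter (fun i => t < u i) ≠ Finset.univ →
      RCC W (Finset.univ.filter (fun i => tstar < u i)) ≤
        RCC W (Finset.univ.filter (fun i => t < u i)))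
    (C : Finset (Fin n))
    (hC : C = if (Finset.univ.filter (fun i => tstar < u i)).card ≤
        ((Finset.univ.filter (fun i => tstar < u i))ᶜ).card
      then Finset.univ.filter (fun i => tstar < u i)
      else (Finset.univ.filter (fun i => tstar < u i))ᶜ)
    (f : Fin n → ℝ) (hf : f ≠ 0)
    (hmed : ∀ c : ℝ, ∑ i, |f i| ≤ ∑ i, |f i - c|)
    (hF : F1 W f ≤ F1 W (fun i => if i ∈ C then (1 : ℝ) else 0)) :
    ∃ t : ℝ, (Finset.univ.filter (fun i => t < f i)).Nonempty ∧
      Finset.univ.filter (fun i => t < f i) ≠ Finset.univ ∧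
      RCC W (Finset.univ.filter (fun i => t < f i)) ≤
        RCC W (Finset.univ.filter (fun i => tstar < u i)) := by
  classical
  have npos : 0 < n := by omega
  haveI : Nonempty (Fin n) := ⟨⟨0, npos⟩⟩
  set Cu : Finset (Fin n) := Finset.univ.filter (fun i => tstar < u i) with hCu
  -- notation for threshold sets of f
  set S : ℝ → Finset (Fin n) := fun t => Finset.univ.filter (fun i => t < f i) with hSdef
  -- ‖f‖₁ > 0
  have hnorm : 0 < ∑ i, |f i| := by
    have h1 : ∃ i, f i ≠ 0 := by
      by_contra h
      push_neg at h
      exact hf (funext h)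
    obtain ⟨i0, hi0⟩ := h1
    have : ∀ i ∈ (univ : Finset (Fin n)), 0 ≤ |f i| := fun i _ => abs_nonneg _
    exact Finset.sum_pos' this ⟨i0, Finset.mem_univ i0, abs_pos.2 hi0⟩
  -- TV f ≥ 0 and lam ≥ 0
  have hTVnn : 0 ≤ TV W f := by
    have : ∀ i ∈ (univ : Finset (Fin n)), 0 ≤ ∑ j, W i j * |f i - f j| := by
      intro i _
      exact Finset.sum_nonneg fun j _ => mul_nonneg (hnonneg i j) (abs_nonneg _)
    have := Finset.sum_nonneg this
    unfold TV
    positivity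
  set lam : ℝ := F1 W f with hlam
  have hlamnn : 0 ≤ lam := div_nonneg hTVnn hnorm.le
  have hTVf : TV W f = lam * ∑ i, |f i| := by
    rw [hlam]
    field_simp [F1]
    rw [F1, div_mul_cancel₀ _ hnorm.ne']
  -- min and max of f
  have hune : ((univ : Finset (Fin n)).image f).Nonempty := (Finset.univ_nonempty).image f
  set vmin := ((univ : Finset (Fin n)).image f).min' hune with hvmin
  set vmax := ((univ : Finset (Fin n)).image f).max' hune with hvmax
  obtain ⟨imin, -, himin⟩ := Finset.mem_image.1 (((univ : Finset (Fin n)).image f).min'_mem hune)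
  obtain ⟨imax, -, himax⟩ := Finset.mem_image.1 (((univ : Finset (Fin n)).image f).max'_mem hune)
  rw [← hvmin] at himin
  rw [← hvmax] at himax
  have hminle : ∀ i, vmin ≤ f i := fun i =>
    Finset.min'_le _ _ (Finset.mem_image_of_mem f (Finset.mem_univ i))
  have hlemax : ∀ i, f i ≤ vmax := fun i =>
    Finset.le_max' _ _ (Finset.mem_image_of_mem f (Finset.mem_univ i))
  have hvlt : vmin < vmax := by
    by_contra h
    push_neg at h
    have hconst : ∀ i, f i = vmin := fun i => le_antisymm (le_trans (hlemax i) h) (hminle i)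
    have := hmed vmin
    have hz : ∑ i, |f i - vmin| = 0 := by
      apply Finset.sum_eq_zero
      intro i _
      rw [hconst i]; simp
    rw [hz] at this
    linarith
  -- median cardinality facts
  have hmedP := qg_median_half f hmed
  have hmedN := qg_median_half_neg f hmed
  -- evaluation of the cut function
  have cutfun_eq : ∀ t : ℝ,
      (∑ i, ∑ j, (Set.Ico (f j) (f i)).indicator (fun _ => W i j) t) =
        ∑ i ∈ S t, ∑ j ∈ (S t)ᶜ, W i j := by
    intro t
    have compl_eq : (S t)ᶜ = univ.filter (fun j => f j ≤ t) := by
      ext j; simp [hSdef, not_lt]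
    rw [compl_eq]
    rw [Finset.sum_filter]
    calc (∑ i, ∑ j, (Set.Ico (f j) (f i)).indicator (fun _ => W i j) t)
        = ∑ i, (if t < f i then ∑ j ∈ univ.filter (fun j => f j ≤ t), W i j else 0) := by
          apply Finset.sum_congr rfl
          intro i _
          by_cases hi : t < f i
          · rw [if_pos hi, Finset.sum_filter]
            apply Finset.sum_congr rfl
            intro j _
            by_cases hj : f j ≤ t
            · simp [Set.indicator_apply, Set.mem_Ico, hi, hj]
            · simp [Set.indicator_apply, Set.mem_Ico, hi, hj]
          · rw [if_neg hi]
            apply Finset.sum_eq_zero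
            intro j _
            simp [Set.indicator_apply, Set.mem_Ico, hi]
      _ = _ := by rw [← Finset.sum_filter]
  -- evaluation of the g function
  set gf : ℝ → ℝ := fun t => ∑ i, ((Set.Ico (0:ℝ) (f i)).indicator (fun _ => (1:ℝ)) t
      + (Set.Ico (f i) (0:ℝ)).indicator (fun _ => (1:ℝ)) t) with hgf
  have gfun_pos : ∀ t : ℝ, 0 ≤ t → gf t = ((S t).card : ℝ) := by
    intro t ht
    have : gf t = ∑ i, (if t < f i then (1:ℝ) else 0) := by
      apply Finset.sum_congr rfl
      intro i _
      have h2 : (Set.Ico (f i) (0:ℝ)).indicator (fun _ => (1:ℝ)) t = 0 := by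
        apply Set.indicator_of_notMem
        rw [Set.mem_Ico]
        rintro ⟨-, hb⟩
        linarith
      have h1 : (Set.Ico (0:ℝ) (f i)).indicator (fun _ => (1:ℝ)) t
          = if t < f i then (1:ℝ) else 0 := by
        by_cases hi : t < f i
        · rw [if_pos hi]
          exact Set.indicator_of_mem (Set.mem_Ico.2 ⟨ht, hi⟩) _
        · rw [if_neg hi]
          apply Set.indicator_of_notMem
          rw [Set.mem_Ico]
          tauto
      rw [h1, h2, add_zero]
    rw [this]
    simp [hSdef, Finset.sum_boole]
  have gfun_neg : ∀ t : ℝ, t < 0 → gf t = (((S t)ᶜ).card : ℝ) := by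
    intro t ht
    have compl_eq : (S t)ᶜ = univ.filter (fun j => f j ≤ t) := by
      ext j; simp [hSdef, not_lt]
    have : gf t = ∑ i, (if f i ≤ t then (1:ℝ) else 0) := by
      apply Finset.sum_congr rfl
      intro i _
      have h1 : (Set.Ico (0:ℝ) (f i)).indicator (fun _ => (1:ℝ)) t = 0 := by
        apply Set.indicator_of_notMem
        rw [Set.mem_Ico]
        rintro ⟨ha, -⟩
        linarith
      have h2 : (Set.Ico (f i) (0:ℝ)).indicator (fun _ => (1:ℝ)) t
          = if f i ≤ t then (1:ℝ) else 0 := by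
        by_cases hi : f i ≤ t
        · rw [if_pos hi]
          exact Set.indicator_of_mem (Set.mem_Ico.2 ⟨hi, ht⟩) _
        · rw [if_neg hi]
          apply Set.indicator_of_notMem
          rw [Set.mem_Ico]
          tauto
      rw [h1, h2, zero_add]
    rw [this, compl_eq]
    simp [Finset.sum_boole]
  -- for good t, g f t is at most the balanced cardinality
  have gfun_le : ∀ t : ℝ, (S t).Nonempty → S t ≠ univ →
      gf t ≤ min ((S t).card : ℝ) (((S t)ᶜ).card : ℝ) := by
    intro t h1 h2
    rcases le_or_gt 0 t with ht | ht
    · rw [gfun_pos t ht]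
      refine le_min le_rfl ?_
      have hsub : S t ⊆ univ.filter (fun i => 0 < f i) := by
        intro i hi
        simp only [hSdef, Finset.mem_filter] at hi ⊢
        exact ⟨hi.1, lt_of_le_of_lt ht hi.2⟩
      have := Finset.card_le_card hsub
      have h3 := Finset.card_le_card (Finset.compl_subset_compl.2 hsub)
      have : (S t).card ≤ ((S t)ᶜ).card := le_trans this (le_trans hmedP h3)
      exact_mod_cast this
    · rw [gfun_neg t ht]
      refine le_min ?_ le_rfl
      have compl_eq : (S t)ᶜ = univ.filter (fun j => f j ≤ t) := by
        ext j; simp [hSdef, not_lt]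
      have hsub : (S t)ᶜ ⊆ univ.filter (fun i => f i < 0) := by
        intro i hi
        rw [compl_eq] at hi
        simp only [Finset.mem_filter] at hi ⊢
        exact ⟨hi.1, lt_of_le_of_lt hi.2 ht⟩
      have h4 := Finset.card_le_card hsub
      have h5 := Finset.card_le_card (Finset.compl_subset_compl.2 hsub)
      rw [compl_compl] at h5
      have : ((S t)ᶜ).card ≤ (S t).card := le_trans h4 (le_trans hmedN h5)
      exact_mod_cast this
  -- main existence claim
  have main : ∃ t : ℝ, (S t).Nonempty ∧ S t ≠ univ ∧
      (∑ i ∈ S t, ∑ j ∈ (S t)ᶜ, W i j) ≤ lam * min ((S t).card : ℝ) (((S t)ᶜ).card : ℝ) := by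
    by_contra hcon
    push_neg at hcon
    -- set of good threshold sets
    set E : Finset (Finset (Fin n)) := Finset.univ.filter
      (fun A => A.Nonempty ∧ A ≠ univ ∧ ∃ t : ℝ, A = S t) with hE
    set e : Finset (Fin n) → ℝ := fun A =>
      (∑ i ∈ A, ∑ j ∈ Aᶜ, W i j) - lam * min ((A.card : ℝ)) ((Aᶜ.card : ℝ)) with he
    have good_mem : ∀ t : ℝ, vmin ≤ t → t < vmax → (S t).Nonempty ∧ S t ≠ univ := by
      intro t h1 h2
      constructor
      · refine ⟨imax, ?_⟩
        simp only [hSdef, Finset.mem_filter, Finset.mem_univ, true_and]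
        rw [himax]
        exact h2
      · intro hcontra
        have : imin ∈ S t := hcontra ▸ Finset.mem_univ imin
        simp only [hSdef, Finset.mem_filter] at this
        rw [himin] at this
        linarith [this.2]
    have hEne : E.Nonempty := by
      refine ⟨S vmin, ?_⟩
      simp only [hE, Finset.mem_filter, Finset.mem_univ, true_and]
      exact ⟨(good_mem vmin le_rfl hvlt).1, (good_mem vmin le_rfl hvlt).2, vmin, rfl⟩
    have hEpos : ∀ A ∈ E, 0 < e A := by
      intro A hA
      simp only [hE, Finset.mem_filter, Finset.mem_univ, true_and] at hA
      obtain ⟨h1, h2, t, ht⟩ := hA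
      subst ht
      have := hcon t h1 h2
      simp only [he]
      linarith
    set δ : ℝ := (E.image e).min' (hEne.image e) with hδ
    have hδpos : 0 < δ := by
      obtain ⟨A, hA, hAe⟩ := Finset.mem_image.1 ((E.image e).min'_mem (hEne.image e))
      rw [hδ, ← hAe]
      exact hEpos A hA
    have hδle : ∀ t : ℝ, (S t).Nonempty → S t ≠ univ → δ ≤ e (S t) := by
      intro t h1 h2
      apply Finset.min'_le
      exact Finset.mem_image_of_mem e (by
        simp only [hE, Finset.mem_filter, Finset.mem_univ, true_and]
        exact ⟨h1, h2, t, rfl⟩)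
    -- the functions to integrate
    set cfun : ℝ → ℝ := fun t => ∑ i, ∑ j, (Set.Ico (f j) (f i)).indicator (fun _ => W i j) t
      with hcfun
    set lfun : ℝ → ℝ := fun t => lam * gf t + (Set.Ico vmin vmax).indicator (fun _ => δ) t
      with hlfun
    -- pointwise inequality
    have pw : ∀ t : ℝ, lfun t ≤ cfun t := by
      intro t
      have hcf : cfun t = ∑ i ∈ S t, ∑ j ∈ (S t)ᶜ, W i j := cutfun_eq t
      by_cases hgood : t ∈ Set.Ico vmin vmax
      · obtain ⟨h1, h2⟩ := good_mem t hgood.1 hgood.2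
        have h3 := hδle t h1 h2
        have h4 := gfun_le t h1 h2
        have h5 : lam * gf t ≤ lam * min ((S t).card : ℝ) (((S t)ᶜ).card : ℝ) :=
          mul_le_mul_of_nonneg_left h4 hlamnn
        simp only [hlfun, Set.indicator_of_mem hgood]
        simp only [he] at h3
        rw [hcf]
        linarith
      · simp only [hlfun, Set.indicator_of_notMem hgood, add_zero]
        rw [Set.mem_Ico, not_and_or, not_le, not_lt] at hgood
        rcases hgood with hlt | hge
        · -- t < vmin : S t = univ
          have hSu : S t = univ := by
            ext i
            simp only [hSdef, Finset.mem_filter, Finset.mem_univ, true_and, iff_true]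
            exact lt_of_lt_of_le hlt (hminle i)
          have hcut0 : cfun t = 0 := by
            rw [hcf, hSu, Finset.compl_univ]
            simp
          have htneg : t < 0 := by
            by_contra h
            push_neg at h
            have hPuniv : univ.filter (fun i => 0 < f i) = (univ : Finset (Fin n)) := by
              ext i
              simp only [Finset.mem_filter, Finset.mem_univ, true_and, iff_true]
              exact lt_of_le_of_lt h (lt_of_lt_of_le hlt (hminle i))
            have := hmedP
            rw [hPuniv, Finset.compl_univ, Finset.card_empty, Finset.card_univ] at this
            simp [Fintype.card_fin] at this
            omega
          rw [gfun_neg t htneg, hSu, Finset.compl_univ, hcut0]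
          simp
        · -- vmax ≤ t : S t = ∅
          have hSe : S t = ∅ := by
            ext i
            simp only [hSdef, Finset.mem_filter, Finset.mem_univ, true_and,
              Finset.notMem_empty, iff_false, not_lt]
            exact le_trans (hlemax i) hge
          have hcut0 : cfun t = 0 := by
            rw [hcf, hSe]
            simp
          have htpos : 0 ≤ t := by
            by_contra h
            push_neg at h
            have hNuniv : univ.filter (fun i => f i < 0) = (univ : Finset (Fin n)) := by
              ext i
              simp only [Finset.mem_filter, Finset.mem_univ, true_and, iff_true]
              exact lt_of_le_of_lt (le_trans (hlemax i) hge) h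
            have := hmedN
            rw [hNuniv, Finset.compl_univ, Finset.card_empty, Finset.card_univ] at this
            simp [Fintype.card_fin] at this
            omega
          rw [gfun_pos t htpos, hSe, hcut0]
          simp
    -- integrability
    have int_c : Integrable cfun := by
      apply integrable_finset_sum
      intro i _
      exact integrable_finset_sum _ (fun j _ => qg_ind_integrable (f j) (f i) (W i j))
    have int_g : Integrable gf := by
      apply integrable_finset_sum
      intro i _
      exact (qg_ind_integrable 0 (f i) 1).add (qg_ind_integrable (f i) 0 1)
    have int_l : Integrable lfun := by
      exact (int_g.const_mul lam).add (qg_ind_integrable vmin vmax δ)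
    -- integrals
    have int_c_val : ∫ t, cfun t = TV W f := by
      rw [hcfun]
      rw [integral_finset_sum _ (fun i _ =>
        integrable_finset_sum _ (fun j _ => qg_ind_integrable (f j) (f i) (W i j)))]
      have : ∀ i ∈ (univ : Finset (Fin n)),
          (∫ t, ∑ j, (Set.Ico (f j) (f i)).indicator (fun _ => W i j) t) =
            ∑ j, max (f i - f j) 0 * W i j := by
        intro i _
        rw [integral_finset_sum _ (fun j _ => qg_ind_integrable (f j) (f i) (W i j))]
        exact Finset.sum_congr rfl fun j _ => qg_ind_integral (f j) (f i) (W i j)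
      rw [Finset.sum_congr rfl this]
      -- symmetrization
      have swap : ∑ i, ∑ j, max (f i - f j) 0 * W i j
          = ∑ i, ∑ j, max (f j - f i) 0 * W i j := by
        rw [Finset.sum_comm]
        exact Finset.sum_congr rfl fun i _ => Finset.sum_congr rfl fun j _ => by rw [hsym]
      have two_eq : 2 * (∑ i, ∑ j, max (f i - f j) 0 * W i j)
          = ∑ i, ∑ j, |f i - f j| * W i j := by
        rw [two_mul]
        nth_rewrite 2 [swap]
        rw [← Finset.sum_add_distrib]
        apply Finset.sum_congr rfl
        intro i _
        rw [← Finset.sum_add_distrib]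
        apply Finset.sum_congr rfl
        intro j _
        rw [← add_mul, qg_max_add_max]
      have tv_eq : TV W f = (1/2) * ∑ i, ∑ j, |f i - f j| * W i j := by
        unfold TV
        congr 1
        exact Finset.sum_congr rfl fun i _ => Finset.sum_congr rfl fun j _ => mul_comm _ _
      rw [tv_eq]
      linarith
    have int_g_val : ∫ t, gf t = ∑ i, |f i| := by
      calc ∫ t, gf t
          = ∑ i, ∫ t, ((Set.Ico (0:ℝ) (f i)).indicator (fun _ => (1:ℝ)) t
              + (Set.Ico (f i) (0:ℝ)).indicator (fun _ => (1:ℝ)) t) :=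
            integral_finset_sum _ (fun i _ =>
              (qg_ind_integrable 0 (f i) 1).add (qg_ind_integrable (f i) 0 1))
        _ = ∑ i, |f i| := by
            apply Finset.sum_congr rfl
            intro i _
            rw [integral_add (qg_ind_integrable 0 (f i) 1) (qg_ind_integrable (f i) 0 1),
              qg_ind_integral, qg_ind_integral, mul_one, mul_one]
            have h := qg_max_add_max (f i) 0
            rw [sub_zero, zero_sub] at h
            rw [sub_zero, zero_sub, h]
    have int_l_val : ∫ t, lfun t = lam * (∑ i, |f i|) + (vmax - vmin) * δ := by
      rw [hlfun]
      rw [integral_add (int_g.const_mul lam) (qg_ind_integrable vmin vmax δ)]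
      rw [MeasureTheory.integral_const_mul, int_g_val, qg_ind_integral]
      rw [max_eq_left (by linarith)]
    have := integral_mono int_l int_c pw
    rw [int_c_val, int_l_val, hTVf] at this
    nlinarith
  -- from main claim to the conclusion
  obtain ⟨t, h1, h2, h3⟩ := main
  refine ⟨t, h1, h2, ?_⟩
  -- RCC of S t is at most lam
  have hcard1 : (0:ℝ) < (S t).card := by
    exact_mod_cast Finset.card_pos.2 h1
  have hcard2 : (0:ℝ) < ((S t)ᶜ).card := by
    have hne2 : ((S t)ᶜ).Nonempty := by
      rw [← Finset.card_pos, Finset.card_compl]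
      have hlt := Finset.card_lt_card (lt_of_le_of_ne (Finset.subset_univ (S t)) h2)
      rw [Finset.card_univ] at hlt
      omega
    exact_mod_cast Finset.card_pos.2 hne2
  have hminpos : 0 < min ((S t).card : ℝ) (((S t)ᶜ).card : ℝ) := lt_min hcard1 hcard2
  have hRCCle : RCC W (S t) ≤ lam := by
    rw [RCC, div_le_iff₀ hminpos]
    linarith [h3]
  -- F1 of the indicator equals RCC of Cu
  have hF1eq : F1 W (fun i => if i ∈ C then (1 : ℝ) else 0) = RCC W Cu := by
    -- TV of indicator is the cut of C
    have filtC : (univ.filter (fun j => j ∈ C)) = C := by ext j; simp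
    have filtCc : (univ.filter (fun j => j ∉ C)) = Cᶜ := by ext j; simp
    have tv_eq : TV W (fun i => if i ∈ C then (1 : ℝ) else 0) = ∑ i ∈ C, ∑ j ∈ Cᶜ, W i j := by
      unfold TV
      have term_eq : ∀ i j : Fin n,
          W i j * |(if i ∈ C then (1:ℝ) else 0) - (if j ∈ C then (1:ℝ) else 0)| =
          (if i ∈ C ∧ j ∉ C then W i j else 0)
          + (if j ∈ C ∧ i ∉ C then W i j else 0) := by
        intro i j
        by_cases hi : i ∈ C <;> by_cases hj : j ∈ C <;> simp [hi, hj]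
      have sum1 : (∑ i, ∑ j, if i ∈ C ∧ j ∉ C then W i j else 0)
          = ∑ i ∈ C, ∑ j ∈ Cᶜ, W i j := qg_cut_sum C W
      have sum2 : (∑ i, ∑ j, if j ∈ C ∧ i ∉ C then W i j else 0)
          = ∑ i ∈ C, ∑ j ∈ Cᶜ, W i j := by
        rw [Finset.sum_comm, qg_cut_sum C (fun a b => W b a)]
        exact Finset.sum_congr rfl fun a _ => Finset.sum_congr rfl fun b _ => hsym b a
      calc (1/2 : ℝ) * ∑ i, ∑ j,
            W i j * |(if i ∈ C then (1:ℝ) else 0) - (if j ∈ C then (1:ℝ) else 0)|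
          = (1/2 : ℝ) * (∑ i ∈ C, ∑ j ∈ Cᶜ, W i j + ∑ i ∈ C, ∑ j ∈ Cᶜ, W i j) := by
            rw [show (∑ i, ∑ j,
                W i j * |(if i ∈ C then (1:ℝ) else 0) - (if j ∈ C then (1:ℝ) else 0)|)
              = ∑ i, ∑ j, ((if i ∈ C ∧ j ∉ C then W i j else 0)
                + (if j ∈ C ∧ i ∉ C then W i j else 0)) from
              Finset.sum_congr rfl fun i _ => Finset.sum_congr rfl fun j _ => term_eq i j]
            rw [show (∑ i, ∑ j, ((if i ∈ C ∧ j ∉ C then W i j else 0)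
                + (if j ∈ C ∧ i ∉ C then W i j else 0)))
              = (∑ i, ∑ j, (if i ∈ C ∧ j ∉ C then W i j else 0))
                + ∑ i, ∑ j, (if j ∈ C ∧ i ∉ C then W i j else 0) by
              rw [← Finset.sum_add_distrib]
              exact Finset.sum_congr rfl fun i _ => Finset.sum_add_distrib]
            rw [sum1, sum2]
        _ = ∑ i ∈ C, ∑ j ∈ Cᶜ, W i j := by ring
    have norm_eq : ∑ i, |if i ∈ C then (1:ℝ) else 0| = (C.card : ℝ) := by
      rw [show (∑ i, |if i ∈ C then (1:ℝ) else 0|) = ∑ i, (if i ∈ C then (1:ℝ) else 0) from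
        Finset.sum_congr rfl fun i _ => by by_cases hi : i ∈ C <;> simp [hi]]
      simp [Finset.sum_boole, filtC]
    rw [F1, tv_eq, norm_eq, RCC]
    by_cases hcase : Cu.card ≤ (Cuᶜ).card
    · have hCeq : C = Cu := by rw [hC, if_pos hcase]
      rw [hCeq]
      congr 1
      rw [min_eq_left]
      exact_mod_cast hcase
    · have hCeq : C = Cuᶜ := by rw [hC, if_neg hcase]
      push_neg at hcase
      rw [hCeq, compl_compl]
      have cut_symm : ∑ i ∈ Cuᶜ, ∑ j ∈ Cu, W i j = ∑ i ∈ Cu, ∑ j ∈ Cuᶜ, W i j := by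
        rw [Finset.sum_comm]
        exact Finset.sum_congr rfl fun i _ => Finset.sum_congr rfl fun j _ => hsym j i
      rw [cut_symm]
      congr 1
      rw [min_eq_right]
      exact_mod_cast hcase.le
  calc RCC W (S t) ≤ lam := hRCCle
    _ ≤ F1 W (fun i => if i ∈ C then (1 : ℝ) else 0) := hF
    _ = RCC W Cu := hF1eq
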